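/- Let α, β, γ, c, A be real numbers with α > 0 and γ ≠ 0, and suppose D := (β+c)² + 2Aγ > 0. Set φ₊ := (−(β+c) + √D)/γ. Then there exists a nonconstant solution (φ, ψ) : ℝ → ℝ² of the system (★) such that lim_{y→+∞} φ(y) = lim_{y→−∞} φ(y) = φ₊ and lim_{y→+∞} ψ(y) = lim_{y→−∞} ψ(y) = 0. Moreover, this solution is unique up to translation: if (φ₁, ψ₁) and (φ₂, ψ₂) are two nonconstant solutions of (★) on ℝ with these limits at ±∞, then there exists y₁ ∈ ℝ such that (φ₂(y), ψ₂(y)) = (φ₁(y + y₁), ψ₁(y + y₁)) for all y ∈ ℝ. -/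

import Mathlib

open Real Filter Set Metric

private lemma bdd_of_tendsto {u : ℝ → ℝ} (hc : Continuous u) {l l' : ℝ}
    (h1 : Filter.Tendsto u Filter.atTop (nhds l)) (h2 : Filter.Tendsto u Filter.atBot (nhds l')) :
    ∃ M, ∀ y, |u y| ≤ M := by
  obtain ⟨a, ha⟩ := Filter.eventually_atTop.1 (h1 (Metric.ball_mem_nhds l one_pos))
  obtain ⟨b, hb⟩ := Filter.eventually_atBot.1 (h2 (Metric.ball_mem_nhds l' one_pos))
  obtain ⟨C, hC⟩ := (isCompact_Icc (a := b) (b := a)).exists_bound_of_continuousOn hc.continuousOn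
  refine ⟨max C (max (|l| + 1) (|l'| + 1)), fun y => ?_⟩
  rcases le_or_gt a y with h | h
  · have := ha y h
    rw [Metric.mem_ball, Real.dist_eq] at this
    have : |u y| ≤ |l| + 1 := by
      have := abs_sub_abs_le_abs_sub (u y) l
      linarith
    exact this.trans (le_max_of_le_right (le_max_left _ _))
  · rcases le_or_gt y b with h' | h'
    · have := hb y h'
      rw [Metric.mem_ball, Real.dist_eq] at this
      have : |u y| ≤ |l'| + 1 := by
        have := abs_sub_abs_le_abs_sub (u y) l'
        linarith
      exact this.trans (le_max_of_le_right (le_max_right _ _))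
    · exact (hC y ⟨h'.le, h.le⟩).trans (le_max_left _ _)

private lemma energy_eq (α β γ c A φp : ℝ) (hα : α ≠ 0) {φ ψ : ℝ → ℝ}
    (h1 : ∀ y, HasDerivAt φ (ψ y) y)
    (h2 : ∀ y, HasDerivAt ψ ((-A + (β + c) * φ y + γ / 2 * (φ y) ^ 2) / α) y)
    (ht : Filter.Tendsto φ Filter.atTop (nhds φp))
    (hψt : Filter.Tendsto ψ Filter.atTop (nhds 0)) :
    ∀ y, α/2*(ψ y)^2 - ((-A)*φ y + (β+c)/2*(φ y)^2 + γ/6*(φ y)^3)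
      = - ((-A)*φp + (β+c)/2*φp^2 + γ/6*φp^3) := by
  set E : ℝ → ℝ := fun y => α/2*(ψ y)^2 - ((-A)*φ y + (β+c)/2*(φ y)^2 + γ/6*(φ y)^3) with hE
  have hderiv : ∀ y, HasDerivAt E 0 y := by
    intro y
    have h := (((h2 y).pow 2).const_mul (α/2)).sub
      ((((h1 y).const_mul (-A)).add (((h1 y).pow 2).const_mul ((β+c)/2))).add
        (((h1 y).pow 3).const_mul (γ/6)))
    refine h.congr_deriv (Eq.symm ?_)
    field_simp
    ring
  have hconst : ∀ y, E y = E 0 := fun y =>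
    is_const_of_deriv_eq_zero (fun x => (hderiv x).differentiableAt)
      (fun x => (hderiv x).deriv) y 0
  have hL : Filter.Tendsto E Filter.atTop
      (nhds (α/2*(0:ℝ)^2 - ((-A)*φp + (β+c)/2*φp^2 + γ/6*φp^3))) :=
    (((hψt.pow 2).const_mul (α/2)).sub
      ((((ht.const_mul (-A)).add ((ht.pow 2).const_mul ((β+c)/2))).add
        ((ht.pow 3).const_mul (γ/6)))))
  have h0 : Filter.Tendsto E Filter.atTop (nhds (E 0)) := by
    have : E = fun _ => E 0 := funext hconst
    rw [this]
    exact tendsto_const_nhds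
  have hkey : E 0 = α/2*(0:ℝ)^2 - ((-A)*φp + (β+c)/2*φp^2 + γ/6*φp^3) :=
    tendsto_nhds_unique h0 hL
  intro y
  rw [show α/2*(ψ y)^2 - ((-A)*φ y + (β+c)/2*(φ y)^2 + γ/6*(φ y)^3) = E y from rfl,
    hconst y, hkey]
  ring

open Real Filter Set Metric

private lemma vf_lipschitz (α β γ c A M : ℝ) (hα : 0 < α) (hM : 0 ≤ M) :
    ∃ K : NNReal, LipschitzOnWith K
      (fun p : ℝ × ℝ => (p.2, (-A + (β + c) * p.1 + γ / 2 * p.1 ^ 2) / α))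
      (Metric.closedBall (0 : ℝ × ℝ) M) := by
  have hL0 : (0:ℝ) ≤ 1 + (|β + c| + |γ| * M) / α := by positivity
  refine ⟨⟨1 + (|β + c| + |γ| * M) / α, hL0⟩, ?_⟩
  refine LipschitzOnWith.of_dist_le_mul ?_
  intro p hp q hq
  have hp1 : |p.1| ≤ M := by
    have := mem_closedBall_zero_iff.1 hp
    rw [Prod.norm_def] at this
    exact le_trans (le_max_left _ _) this
  have hq1 : |q.1| ≤ M := by
    have := mem_closedBall_zero_iff.1 hq
    rw [Prod.norm_def] at this
    exact le_trans (le_max_left _ _) this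
  have hd1 : dist p.1 q.1 ≤ dist p q := by rw [Prod.dist_eq]; exact le_max_left _ _
  have hd2 : dist p.2 q.2 ≤ dist p q := by rw [Prod.dist_eq]; exact le_max_right _ _
  have hdnn : (0:ℝ) ≤ dist p q := dist_nonneg
  rw [Prod.dist_eq]
  push_cast
  apply max_le
  · calc dist p.2 q.2 ≤ dist p q := hd2
    _ ≤ (1 + (|β + c| + |γ| * M) / α) * dist p q := by
        nlinarith [abs_nonneg (β+c), abs_nonneg γ, div_nonneg (by positivity : (0:ℝ) ≤ |β+c| + |γ| * M) hα.le]
  · rw [Real.dist_eq]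
    have hrw : (-A + (β + c) * p.1 + γ / 2 * p.1 ^ 2) / α
        - (-A + (β + c) * q.1 + γ / 2 * q.1 ^ 2) / α
        = ((β + c) * (p.1 - q.1) + γ / 2 * ((p.1 + q.1) * (p.1 - q.1))) / α := by
      field_simp; ring
    rw [hrw, abs_div, abs_of_pos hα, div_le_iff₀ hα]
    have h1 : |(β + c) * (p.1 - q.1) + γ / 2 * ((p.1 + q.1) * (p.1 - q.1))|
        ≤ |β + c| * |p.1 - q.1| + |γ| / 2 * (|p.1 + q.1| * |p.1 - q.1|) := by
      calc _ ≤ |(β + c) * (p.1 - q.1)| + |γ / 2 * ((p.1 + q.1) * (p.1 - q.1))| := abs_add_le _ _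
      _ = |β + c| * |p.1 - q.1| + |γ| / 2 * (|p.1 + q.1| * |p.1 - q.1|) := by
          rw [abs_mul, abs_mul, abs_mul, abs_div]
          norm_num
    have h2 : |p.1 + q.1| ≤ 2 * M := by
      calc |p.1 + q.1| ≤ |p.1| + |q.1| := abs_add_le _ _
      _ ≤ 2 * M := by linarith
    have h3 : |p.1 - q.1| ≤ dist p q := by rw [← Real.dist_eq]; exact hd1
    have h4 : (0:ℝ) ≤ |p.1 - q.1| := abs_nonneg _
    calc |(β + c) * (p.1 - q.1) + γ / 2 * ((p.1 + q.1) * (p.1 - q.1))|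
        ≤ |β + c| * |p.1 - q.1| + |γ| / 2 * (|p.1 + q.1| * |p.1 - q.1|) := h1
      _ ≤ (|β + c| + |γ| * M) * dist p q := by
          have hb1 : |β + c| * |p.1 - q.1| ≤ |β + c| * dist p q :=
            mul_le_mul_of_nonneg_left h3 (abs_nonneg _)
          have hb2 : |γ| / 2 * (|p.1 + q.1| * |p.1 - q.1|) ≤ |γ| / 2 * (2 * M * dist p q) :=
            mul_le_mul_of_nonneg_left
              (mul_le_mul h2 h3 h4 (by positivity)) (by positivity)
          nlinarith
      _ ≤ ((1 + (|β + c| + |γ| * M) / α) * dist p q) * α := by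
          rw [mul_comm _ α, ← mul_assoc]
          apply mul_le_mul_of_nonneg_right _ hdnn
          rw [mul_add, mul_one, mul_div_cancel₀ _ hα.ne']
          nlinarith
  done

private lemma sol_unique {v : ℝ × ℝ → ℝ × ℝ} {K : NNReal} {M : ℝ}
    (hlip : LipschitzOnWith K v (Metric.closedBall 0 M))
    {f g : ℝ → ℝ × ℝ} (hf : ∀ y, HasDerivAt f (v (f y)) y) (hg : ∀ y, HasDerivAt g (v (g y)) y)
    (hfM : ∀ y, f y ∈ Metric.closedBall (0 : ℝ × ℝ) M)
    (hgM : ∀ y, g y ∈ Metric.closedBall (0 : ℝ × ℝ) M)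
    {t₀ : ℝ} (heq : f t₀ = g t₀) : ∀ y, f y = g y := by
  intro y
  have hy : y ∈ Set.Ioo (-(|y| + |t₀| + 1)) (|y| + |t₀| + 1) := by
    constructor <;> [nlinarith [neg_abs_le y, abs_nonneg t₀, le_abs_self y];
      nlinarith [le_abs_self y, abs_nonneg t₀]]
  have ht : t₀ ∈ Set.Ioo (-(|y| + |t₀| + 1)) (|y| + |t₀| + 1) := by
    constructor <;> [nlinarith [neg_abs_le t₀, abs_nonneg y];
      nlinarith [le_abs_self t₀, abs_nonneg y]]
  exact ODE_solution_unique_of_mem_Ioo (v := fun _ : ℝ => v)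
    (s := fun _ => Metric.closedBall 0 M) (fun _ _ => hlip) ht
    (fun t _ => ⟨hf t, hfM t⟩) (fun t _ => ⟨hg t, hgM t⟩) heq hy

private lemma exists_homoclinic (α β γ c A : ℝ) (hα : 0 < α) (hγ : γ ≠ 0)
    (D : ℝ) (hD : D = (β + c) ^ 2 + 2 * A * γ) (hDpos : 0 < D)
    (φp : ℝ) (hφp : φp = (-(β + c) + Real.sqrt D) / γ) :
    ∃ φ ψ : ℝ → ℝ,
      (∀ y : ℝ, HasDerivAt φ (ψ y) y) ∧
      (∀ y : ℝ, HasDerivAt ψ ((-A + (β + c) * φ y + γ / 2 * (φ y) ^ 2) / α) y) ∧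
      (¬ ∀ y z : ℝ, (φ y, ψ y) = (φ z, ψ z)) ∧
      Filter.Tendsto φ Filter.atTop (nhds φp) ∧
      Filter.Tendsto φ Filter.atBot (nhds φp) ∧
      Filter.Tendsto ψ Filter.atTop (nhds 0) ∧
      Filter.Tendsto ψ Filter.atBot (nhds 0) := by
  set s : ℝ := Real.sqrt D with hs
  have hs0 : 0 < s := Real.sqrt_pos.2 hDpos
  have hs2 : s ^ 2 = (β + c) ^ 2 + 2 * A * γ := by rw [hs, Real.sq_sqrt hDpos.le, hD]
  set k : ℝ := Real.sqrt (s / (4 * α)) with hk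
  have hk0 : 0 < k := Real.sqrt_pos.2 (by positivity)
  have hk2 : 4 * α * k ^ 2 = s := by
    rw [hk, Real.sq_sqrt (by positivity : (0:ℝ) ≤ s / (4 * α))]
    field_simp
  set B : ℝ := -3 * s / γ with hB
  have hB0 : B ≠ 0 := by
    rw [hB]; intro h
    rcases div_eq_zero_iff.1 h with h | h
    · nlinarith
    · exact hγ h
  have hBγ : γ * B = -3 * s := by rw [hB]; field_simp
  have hroot : -A + (β + c) * φp + γ / 2 * φp ^ 2 = 0 := by
    rw [hφp]; field_simp
    nlinarith [hs2]
  have hslope : (β + c) + γ * φp = s := by rw [hφp]; field_simp; ring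
  have hC : ∀ x : ℝ, Real.cosh x ≠ 0 := fun x => (Real.cosh_pos x).ne'
  have hcosh_top : Filter.Tendsto (fun y : ℝ => (Real.cosh (k * y)) ^ 2)
      Filter.atTop Filter.atTop := by
    have h1 : Filter.Tendsto (fun y : ℝ => k * y) Filter.atTop Filter.atTop :=
      Filter.Tendsto.const_mul_atTop hk0 Filter.tendsto_id
    have h2 : Filter.Tendsto Real.cosh Filter.atTop Filter.atTop := by
      apply Filter.tendsto_atTop_mono (fun x => ?_)
        (Filter.Tendsto.atTop_div_const two_pos Real.tendsto_exp_atTop)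
      rw [Real.cosh_eq]
      have := Real.exp_pos (-x)
      linarith
    exact Filter.tendsto_atTop_mono (fun y => le_self_pow₀ (Real.one_le_cosh _) two_ne_zero)
      (h2.comp h1)
  have hcosh_bot : Filter.Tendsto (fun y : ℝ => (Real.cosh (k * y)) ^ 2)
      Filter.atBot Filter.atTop := by
    have h1 : Filter.Tendsto (fun y : ℝ => k * y) Filter.atBot Filter.atBot :=
      Filter.Tendsto.const_mul_atBot hk0 Filter.tendsto_id
    have h2 : Filter.Tendsto Real.cosh Filter.atBot Filter.atTop := by
      apply Filter.tendsto_atTop_mono (fun x => ?_)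
        (Filter.Tendsto.atTop_div_const two_pos
          (Real.tendsto_exp_atTop.comp Filter.tendsto_neg_atBot_atTop))
      rw [Real.cosh_eq]
      have := Real.exp_pos x
      simp only [Function.comp_apply]
      linarith
    exact Filter.tendsto_atTop_mono (fun y => le_self_pow₀ (Real.one_le_cosh _) two_ne_zero)
      (h2.comp h1)
  have hψbound : ∀ y : ℝ, ‖(-2 * B * k) * (Real.sinh (k * y) * ((Real.cosh (k * y)) ^ 3)⁻¹)‖
      ≤ (2 * |B| * k) * (((Real.cosh (k * y)) ^ 2)⁻¹) := by
    intro y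
    have hCpos := Real.cosh_pos (k * y)
    set C := Real.cosh (k * y)
    set S := Real.sinh (k * y)
    have hSle : |S| ≤ C := by
      rw [← Real.sqrt_sq_eq_abs, ← Real.sqrt_sq hCpos.le]
      apply Real.sqrt_le_sqrt
      rw [Real.sinh_sq]
      linarith
    have habs : ‖(-2 * B * k) * (S * (C ^ 3)⁻¹)‖ = (2 * |B| * k) * (|S| * (C ^ 3)⁻¹) := by
      rw [Real.norm_eq_abs, abs_mul, abs_mul, abs_mul, abs_mul, abs_inv, abs_pow,
        abs_of_pos hCpos, abs_of_pos hk0]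
      norm_num
    rw [habs]
    apply mul_le_mul_of_nonneg_left _ (by positivity)
    have h1 : |S| * (C ^ 3)⁻¹ ≤ C * (C ^ 3)⁻¹ :=
      mul_le_mul_of_nonneg_right hSle (by positivity)
    have h2 : C * (C ^ 3)⁻¹ = (C ^ 2)⁻¹ := by
      field_simp
    rw [h2] at h1
    exact h1
  refine ⟨fun y => φp + B * ((Real.cosh (k * y)) ^ 2)⁻¹,
    fun y => (-2 * B * k) * (Real.sinh (k * y) * ((Real.cosh (k * y)) ^ 3)⁻¹),
    ?_, ?_, ?_, ?_, ?_, ?_, ?_⟩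
  · intro y
    have hkl : HasDerivAt (fun y : ℝ => k * y) k y := by
      simpa using (hasDerivAt_id y).const_mul k
    have hch : HasDerivAt (fun y : ℝ => Real.cosh (k * y)) (Real.sinh (k * y) * k) y :=
      (Real.hasDerivAt_cosh (k * y)).comp y hkl
    have hsq := hch.pow 2
    have hinv := hsq.inv (pow_ne_zero 2 (hC _))
    have h := (hinv.const_mul B).const_add φp
    refine h.congr_deriv (Eq.symm ?_)
    simp only [Pi.pow_apply, Pi.inv_apply, Pi.mul_apply]
    have := hC (k * y)
    field_simp
    ring
  · intro y
    have hkl : HasDerivAt (fun y : ℝ => k * y) k y := by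
      simpa using (hasDerivAt_id y).const_mul k
    have hch : HasDerivAt (fun y : ℝ => Real.cosh (k * y)) (Real.sinh (k * y) * k) y :=
      (Real.hasDerivAt_cosh (k * y)).comp y hkl
    have hsh : HasDerivAt (fun y : ℝ => Real.sinh (k * y)) (Real.cosh (k * y) * k) y :=
      (Real.hasDerivAt_sinh (k * y)).comp y hkl
    have hc3 := hch.pow 3
    have hinv3 := hc3.inv (pow_ne_zero 3 (hC _))
    have h := (hsh.mul hinv3).const_mul (-2 * B * k)
    refine h.congr_deriv (Eq.symm ?_)
    simp only [Pi.pow_apply, Pi.inv_apply, Pi.mul_apply]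
    set C := Real.cosh (k * y)
    set S := Real.sinh (k * y)
    have hSC : S ^ 2 = C ^ 2 - 1 := Real.sinh_sq (k * y)
    have hCne : C ≠ 0 := hC (k * y)
    have step1 : -A + (β + c) * (φp + B * (C ^ 2)⁻¹) + γ / 2 * (φp + B * (C ^ 2)⁻¹) ^ 2
        = s * B * (C ^ 2)⁻¹ + γ / 2 * B ^ 2 * ((C ^ 2)⁻¹) ^ 2 := by
      linear_combination hroot + (B * (C ^ 2)⁻¹) * hslope
    rw [step1]
    have step2 : (s * B * (C ^ 2)⁻¹ + γ / 2 * B ^ 2 * ((C ^ 2)⁻¹) ^ 2) / α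
        = 4 * B * k ^ 2 * (C ^ 2)⁻¹ - 6 * B * k ^ 2 * ((C ^ 2)⁻¹) ^ 2 := by
      rw [div_eq_iff hα.ne']
      linear_combination (3 * B * ((C ^ 2)⁻¹) ^ 2 / 2 - B * (C ^ 2)⁻¹) * hk2
        + (B * ((C ^ 2)⁻¹) ^ 2 / 2) * hBγ
    rw [step2]
    field_simp
    linear_combination (-6 * C ^ 2) * hSC
  · intro hall
    have h01 := hall 0 1
    have hφ01 := congrArg Prod.fst h01
    simp only [mul_zero, Real.cosh_zero] at hφ01
    have hc1 : 1 < Real.cosh (k * 1) := Real.one_lt_cosh.2 (by simpa using hk0.ne')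
    have hinv : ((Real.cosh (k * 1)) ^ 2)⁻¹ < 1 := by
      rw [inv_lt_one_iff₀]
      right
      nlinarith
    have h2 : B * 1 = B * ((Real.cosh (k * 1)) ^ 2)⁻¹ := by
      have : φp + B * ((1:ℝ) ^ 2)⁻¹ = φp + B * ((Real.cosh (k * 1)) ^ 2)⁻¹ := hφ01
      simpa using this
    have h3 := mul_left_cancel₀ hB0 h2
    rw [← h3] at hinv
    exact lt_irrefl 1 hinv
  · have h := (hcosh_top.inv_tendsto_atTop.const_mul B).const_add φp
    simpa using h
  · have h := (hcosh_bot.inv_tendsto_atTop.const_mul B).const_add φp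
    simpa using h
  · exact squeeze_zero_norm hψbound
      (by simpa using (hcosh_top.inv_tendsto_atTop.const_mul (2 * |B| * k)))
  · exact squeeze_zero_norm hψbound
      (by simpa using (hcosh_bot.inv_tendsto_atTop.const_mul (2 * |B| * k)))

/-- A nonconstant solution of the first-order system (★)
`φ' = ψ`, `ψ' = (−A + (β+c)φ + (γ/2)φ²)/α` on `ℝ` which converges to the
stationary point `(φ₊, 0)` at both `±∞` (a homoclinic solution). -/
def IsHomoclinicSol (α β γ c A φp : ℝ) (φ ψ : ℝ → ℝ) : Prop :=
  (∀ y : ℝ, HasDerivAt φ (ψ y) y) ∧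
  (∀ y : ℝ, HasDerivAt ψ ((-A + (β + c) * φ y + γ / 2 * (φ y) ^ 2) / α) y) ∧
  (¬ ∀ y z : ℝ, (φ y, ψ y) = (φ z, ψ z)) ∧
  Filter.Tendsto φ Filter.atTop (nhds φp) ∧
  Filter.Tendsto φ Filter.atBot (nhds φp) ∧
  Filter.Tendsto ψ Filter.atTop (nhds 0) ∧
  Filter.Tendsto ψ Filter.atBot (nhds 0)
private lemma psi_zero {φ ψ : ℝ → ℝ} {φp : ℝ}
    (h1 : ∀ y, HasDerivAt φ (ψ y) y) (hψc : Continuous ψ)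
    (htop : Filter.Tendsto φ Filter.atTop (nhds φp))
    (hbot : Filter.Tendsto φ Filter.atBot (nhds φp)) :
    ∃ y, ψ y = 0 := by
  by_contra hno
  push_neg at hno
  have hdiff : Differentiable ℝ φ := fun y => (h1 y).differentiableAt
  have hderiv : ∀ y, deriv φ y = ψ y := fun y => (h1 y).deriv
  have hsign : (∀ y, 0 < ψ y) ∨ (∀ y, ψ y < 0) := by
    rcases (hno 0).lt_or_gt with h0 | h0
    · right
      intro y
      rcases (hno y).lt_or_gt with h | h
      · exact h
      · exfalso
        have hmem : (0:ℝ) ∈ Set.uIcc (ψ 0) (ψ y) := Set.mem_uIcc.2 (Or.inl ⟨h0.le, h.le⟩)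
        obtain ⟨z, _, hz⟩ := intermediate_value_uIcc hψc.continuousOn hmem
        exact hno z hz
    · left
      intro y
      rcases (hno y).lt_or_gt with h | h
      · exfalso
        have hmem : (0:ℝ) ∈ Set.uIcc (ψ 0) (ψ y) := Set.mem_uIcc.2 (Or.inr ⟨h.le, h0.le⟩)
        obtain ⟨z, _, hz⟩ := intermediate_value_uIcc hψc.continuousOn hmem
        exact hno z hz
      · exact h
  have hφconst : ∀ y, φ y = φp := by
    rcases hsign with hsgn | hsgn
    · have hmono : Monotone φ :=
        monotone_of_deriv_nonneg hdiff (fun y => by rw [hderiv]; exact (hsgn y).le)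
      exact fun y => le_antisymm (hmono.ge_of_tendsto htop y) (hmono.le_of_tendsto hbot y)
    · have hanti : Antitone φ :=
        antitone_of_deriv_nonpos hdiff (fun y => by rw [hderiv]; exact (hsgn y).le)
      exact fun y => le_antisymm (hanti.ge_of_tendsto hbot y) (hanti.le_of_tendsto htop y)
  have hψ0 : ψ 0 = 0 := by
    have hφ : φ = fun _ => φp := funext hφconst
    have h0 := h1 0
    rw [hφ] at h0
    exact h0.unique (hasDerivAt_const 0 φp)
  exact hno 0 hψ0

private lemma homoclinic_unique (α β γ c A : ℝ) (hα : 0 < α) (hγ : γ ≠ 0)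
    (D : ℝ) (hD : D = (β + c) ^ 2 + 2 * A * γ) (hDpos : 0 < D)
    (φp : ℝ) (hφp : φp = (-(β + c) + Real.sqrt D) / γ)
    (φ₁ ψ₁ φ₂ ψ₂ : ℝ → ℝ)
    (H1 : IsHomoclinicSol α β γ c A φp φ₁ ψ₁)
    (H2 : IsHomoclinicSol α β γ c A φp φ₂ ψ₂) :
    ∃ y₁ : ℝ, ∀ y : ℝ, (φ₂ y, ψ₂ y) = (φ₁ (y + y₁), ψ₁ (y + y₁)) := by
  obtain ⟨h11, h12, h13, h14, h15, h16, h17⟩ := H1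
  obtain ⟨h21, h22, h23, h24, h25, h26, h27⟩ := H2
  set v : ℝ × ℝ → ℝ × ℝ :=
    fun p => (p.2, (-A + (β + c) * p.1 + γ / 2 * p.1 ^ 2) / α) with hv
  set s : ℝ := Real.sqrt D with hs
  have hs0 : 0 < s := Real.sqrt_pos.2 hDpos
  have hs2 : s ^ 2 = (β + c) ^ 2 + 2 * A * γ := by rw [hs, Real.sq_sqrt hDpos.le, hD]
  have hroot : -A + (β + c) * φp + γ / 2 * φp ^ 2 = 0 := by
    rw [hφp]; field_simp
    nlinarith [hs2]
  set r : ℝ := (-(β + c) - 2 * s) / γ with hr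
  have hgr : γ * r = -(β + c) - 2 * s := by rw [hr]; field_simp
  have hgφ : γ * φp = -(β + c) + s := by rw [hφp]; field_simp
  -- continuity
  have hφ₁c : Continuous φ₁ := continuous_iff_continuousAt.2 fun y => (h11 y).continuousAt
  have hψ₁c : Continuous ψ₁ := continuous_iff_continuousAt.2 fun y => (h12 y).continuousAt
  have hφ₂c : Continuous φ₂ := continuous_iff_continuousAt.2 fun y => (h21 y).continuousAt
  have hψ₂c : Continuous ψ₂ := continuous_iff_continuousAt.2 fun y => (h22 y).continuousAt
  -- bounds
  obtain ⟨Ma, hMa⟩ := bdd_of_tendsto hφ₁c h14 h15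
  obtain ⟨Mb, hMb⟩ := bdd_of_tendsto hψ₁c h16 h17
  obtain ⟨Mc, hMc⟩ := bdd_of_tendsto hφ₂c h24 h25
  obtain ⟨Md, hMd⟩ := bdd_of_tendsto hψ₂c h26 h27
  set M : ℝ := max (max Ma Mb) (max Mc Md) with hM
  have hM0 : 0 ≤ M :=
    (abs_nonneg (φ₁ 0)).trans ((hMa 0).trans ((le_max_left Ma Mb).trans (le_max_left _ _)))
  have hmem1 : ∀ y, (φ₁ y, ψ₁ y) ∈ Metric.closedBall (0 : ℝ × ℝ) M := by
    intro y
    rw [mem_closedBall_zero_iff, Prod.norm_def]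
    apply max_le
    · exact (hMa y).trans ((le_max_left Ma Mb).trans (le_max_left _ _))
    · exact (hMb y).trans ((le_max_right Ma Mb).trans (le_max_left _ _))
  have hmem2 : ∀ y, (φ₂ y, ψ₂ y) ∈ Metric.closedBall (0 : ℝ × ℝ) M := by
    intro y
    rw [mem_closedBall_zero_iff, Prod.norm_def]
    apply max_le
    · exact (hMc y).trans ((le_max_left Mc Md).trans (le_max_right _ _))
    · exact (hMd y).trans ((le_max_right Mc Md).trans (le_max_right _ _))
  obtain ⟨K, hK⟩ := vf_lipschitz α β γ c A M hα hM0
  -- key step : each solution passes through (r, 0)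
  have main : ∀ φ ψ : ℝ → ℝ, (∀ y, HasDerivAt φ (ψ y) y) →
      (∀ y, HasDerivAt ψ ((-A + (β + c) * φ y + γ / 2 * (φ y) ^ 2) / α) y) →
      (¬ ∀ y z : ℝ, (φ y, ψ y) = (φ z, ψ z)) →
      Filter.Tendsto φ Filter.atTop (nhds φp) →
      Filter.Tendsto φ Filter.atBot (nhds φp) →
      Filter.Tendsto ψ Filter.atTop (nhds 0) →
      (∀ y, (φ y, ψ y) ∈ Metric.closedBall (0 : ℝ × ℝ) M) →
      ∃ y₀, ψ y₀ = 0 ∧ φ y₀ = r := by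
    intro φ ψ hd1 hd2 hnc htop hbot hψtop hmem
    have hψc : Continuous ψ := continuous_iff_continuousAt.2 fun y => (hd2 y).continuousAt
    obtain ⟨y₀, hy₀⟩ := psi_zero hd1 hψc htop hbot
    refine ⟨y₀, hy₀, ?_⟩
    have hnotp : φ y₀ ≠ φp := by
      intro heqp
      apply hnc
      have hzero : v (φp, 0) = (0, 0) := by
        simp only [hv]
        rw [hroot]
        norm_num
      have hgsol : ∀ y : ℝ, HasDerivAt (fun _ : ℝ => ((φp : ℝ), (0 : ℝ)))
          (v ((fun _ : ℝ => ((φp : ℝ), (0 : ℝ))) y)) y := by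
        intro y
        rw [show ((fun _ : ℝ => ((φp : ℝ), (0 : ℝ))) y) = ((φp : ℝ), (0:ℝ)) from rfl, hzero]
        exact hasDerivAt_const y _
      have hgmem : ∀ y : ℝ, ((φp : ℝ), (0 : ℝ)) ∈ Metric.closedBall (0 : ℝ × ℝ) M := by
        intro y
        have h := hmem y₀
        rw [heqp, hy₀] at h
        exact h
      have heq0 : (fun y => (φ y, ψ y)) y₀ = (fun _ : ℝ => ((φp : ℝ), (0 : ℝ))) y₀ := by
        simp only
        rw [heqp, hy₀]
      have hequ := sol_unique hK (fun y => (hd1 y).prodMk (hd2 y)) hgsol hmem hgmem heq0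
      intro y z
      have hy := hequ y
      have hz := hequ z
      rw [hy, hz]
    have hen := energy_eq α β γ c A φp hα.ne' hd1 hd2 htop hψtop y₀
    rw [hy₀] at hen
    have hW : ((-A) * (φ y₀) + (β + c) / 2 * (φ y₀) ^ 2 + γ / 6 * (φ y₀) ^ 3)
        - ((-A) * φp + (β + c) / 2 * φp ^ 2 + γ / 6 * φp ^ 3) = 0 := by nlinarith [hen]
    have hfact : 6 * γ ^ 2 * (((-A) * (φ y₀) + (β + c) / 2 * (φ y₀) ^ 2 + γ / 6 * (φ y₀) ^ 3)
        - ((-A) * φp + (β + c) / 2 * φp ^ 2 + γ / 6 * φp ^ 3))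
        = (γ * (φ y₀) - γ * φp) ^ 2 * (γ * (φ y₀) - γ * r) := by
      linear_combination (3 * (γ * (φ y₀)) - 3 * (-(β + c) + s)) * hs2
        + (-((γ * φp) ^ 2 + (γ * φp) * (-(β + c) + s) + (-(β + c) + s) ^ 2
            + 3 * (β + c) * ((γ * φp) + (-(β + c) + s)) - 6 * A * γ)
          + (2 * (γ * (φ y₀)) - (γ * φp) - (-(β + c) + s))
            * ((γ * (φ y₀)) - (-(β + c) - 2 * s))) * hgφ
        + ((γ * (φ y₀)) - (γ * φp)) ^ 2 * hgr
    rw [hW, mul_zero] at hfact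
    have hne : γ * (φ y₀) - γ * φp ≠ 0 := by
      intro h
      exact hnotp (mul_left_cancel₀ hγ (by linarith))
    have hfin : γ * (φ y₀) - γ * r = 0 := by
      rcases mul_eq_zero.1 hfact.symm with h | h
      · exact absurd (pow_eq_zero_iff two_ne_zero |>.1 h) hne
      · exact h
    exact mul_left_cancel₀ hγ (by linarith)
  obtain ⟨y₀, hψ10, hφ10⟩ := main φ₁ ψ₁ h11 h12 h13 h14 h15 h16 hmem1
  obtain ⟨z₀, hψ20, hφ20⟩ := main φ₂ ψ₂ h21 h22 h23 h24 h25 h26 hmem2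
  refine ⟨y₀ - z₀, ?_⟩
  have hfd : ∀ y : ℝ, HasDerivAt (fun y => (φ₁ (y + (y₀ - z₀)), ψ₁ (y + (y₀ - z₀))))
      (v ((fun y => (φ₁ (y + (y₀ - z₀)), ψ₁ (y + (y₀ - z₀)))) y)) y := by
    intro y
    have ha : HasDerivAt (fun y : ℝ => y + (y₀ - z₀)) 1 y := (hasDerivAt_id y).add_const _
    have hφd : HasDerivAt (fun y : ℝ => φ₁ (y + (y₀ - z₀))) (ψ₁ (y + (y₀ - z₀))) y := by
      simpa [Function.comp_def] using (h11 (y + (y₀ - z₀))).comp y ha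
    have hψd : HasDerivAt (fun y : ℝ => ψ₁ (y + (y₀ - z₀)))
        ((-A + (β + c) * φ₁ (y + (y₀ - z₀)) + γ / 2 * (φ₁ (y + (y₀ - z₀))) ^ 2) / α) y := by
      simpa [Function.comp_def] using (h12 (y + (y₀ - z₀))).comp y ha
    exact hφd.prodMk hψd
  have hfmem : ∀ y : ℝ, (φ₁ (y + (y₀ - z₀)), ψ₁ (y + (y₀ - z₀))) ∈
      Metric.closedBall (0 : ℝ × ℝ) M := fun y => hmem1 _
  have heq0 : (fun y => (φ₁ (y + (y₀ - z₀)), ψ₁ (y + (y₀ - z₀)))) z₀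
      = (fun y => (φ₂ y, ψ₂ y)) z₀ := by
    simp only
    rw [show z₀ + (y₀ - z₀) = y₀ by ring, hφ10, hψ10, hφ20, hψ20]
  have hequ := sol_unique hK hfd (fun y => (h21 y).prodMk (h22 y)) hfmem hmem2 heq0
  intro y
  exact (hequ y).symm

/-- If `D := (β+c)² + 2Aγ > 0` and `φ₊ := (−(β+c) + √D)/γ`, then there exists
a nonconstant solution of (★) homoclinic to `(φ₊, 0)`, and it is unique up to translation. -/
theorem stmt_6 (α β γ c A : ℝ) (hα : 0 < α) (hγ : γ ≠ 0)
    (D : ℝ) (hD : D = (β + c) ^ 2 + 2 * A * γ) (hDpos : 0 < D)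
    (φp : ℝ) (hφp : φp = (-(β + c) + Real.sqrt D) / γ) :
    (∃ φ ψ : ℝ → ℝ, IsHomoclinicSol α β γ c A φp φ ψ) ∧
    (∀ φ₁ ψ₁ φ₂ ψ₂ : ℝ → ℝ,
      IsHomoclinicSol α β γ c A φp φ₁ ψ₁ →
      IsHomoclinicSol α β γ c A φp φ₂ ψ₂ →
      ∃ y₁ : ℝ, ∀ y : ℝ, (φ₂ y, ψ₂ y) = (φ₁ (y + y₁), ψ₁ (y + y₁))) := by
  constructor
  · obtain ⟨φ, ψ, h⟩ := exists_homoclinic α β γ c A hα hγ D hD hDpos φp hφp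
    exact ⟨φ, ψ, h⟩
  · intro φ₁ ψ₁ φ₂ ψ₂ H1 H2
    exact homoclinic_unique α β γ c A hα hγ D hD hDpos φp hφp φ₁ ψ₁ φ₂ ψ₂ H1 H2
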